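/- For complex numbers μ, r, s and every natural number t, the Fuss–Catalan numbers satisfy the convolution identity A_t(μ, r+s) = ∑_{u=0}^{t} A_u(μ, r) · A_{t-u}(μ, s). -/

import Mathlib

open Polynomial

/-- The Fuss–Catalan number `A_t(μ, r)`: `A_0 = 1` and for `t ≥ 1`,
`A_t(μ, r) = (r/t!) · ∏_{j=1}^{t-1} (tμ + r - j)`. -/
noncomputable def fussCatalan (μ r : ℂ) (t : ℕ) : ℂ :=
  if t = 0 then 1
  else r / (Nat.factorial t : ℂ) *
    ∏ j ∈ Finset.Icc 1 (t - 1), ((t : ℂ) * μ + r - (j : ℂ))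

lemma fussCatalan_prod_Icc_range (f : ℕ → ℂ) (m : ℕ) :
    ∏ j ∈ Finset.Icc 1 m, f j = ∏ i ∈ Finset.range m, f (1 + i) := by
  rw [← Finset.Ico_add_one_right_eq_Icc, Finset.prod_Ico_eq_prod_range]
  simp

lemma fussCatalan_succ (μ r : ℂ) (n : ℕ) :
    fussCatalan μ r (n + 1) =
      r / (Nat.factorial (n + 1) : ℂ) *
        ∏ i ∈ Finset.range n, (((n : ℂ) + 1) * μ + r - 1 - (i : ℂ)) := by
  unfold fussCatalan
  simp only [Nat.succ_ne_zero, if_false, Nat.add_sub_cancel]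
  rw [fussCatalan_prod_Icc_range (fun j => ((n + 1 : ℕ) : ℂ) * μ + r - (j : ℂ)) n]
  congr 1
  refine Finset.prod_congr rfl fun i _ => ?_
  push_cast
  ring

lemma prod_shift (c : ℂ) (m : ℕ) :
    ∏ i ∈ Finset.range (m + 1), (c - (i : ℂ)) =
      (∏ i ∈ Finset.range m, (c - 1 - (i : ℂ))) * c := by
  rw [Finset.prod_range_succ']
  simp only [Nat.cast_zero, sub_zero]
  refine congrArg₂ _ (Finset.prod_congr rfl fun i _ => ?_) rfl
  push_cast
  ring

/-- Pascal-type recurrence for Fuss–Catalan numbers. -/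
lemma fussCatalan_pascal (μ r : ℂ) (t : ℕ) :
    fussCatalan μ (r + 1) (t + 1) = fussCatalan μ r (t + 1) + fussCatalan μ (r + μ) t := by
  cases t with
  | zero =>
      simp [fussCatalan_succ, fussCatalan]
  | succ m =>
      rw [fussCatalan_succ μ (r + 1) (m + 1), fussCatalan_succ μ r (m + 1),
        fussCatalan_succ μ (r + μ) m]
      set c : ℂ := (((m + 1 : ℕ) : ℂ) + 1) * μ + r with hc
      have hA : (∏ i ∈ Finset.range (m + 1), ((((m + 1 : ℕ) : ℂ) + 1) * μ + (r + 1) - 1 - (i : ℂ)))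
          = (∏ i ∈ Finset.range m, (c - 1 - (i : ℂ))) * c := by
        rw [← prod_shift c m]
        refine Finset.prod_congr rfl fun i _ => ?_
        rw [hc]; ring
      have hB : (∏ i ∈ Finset.range (m + 1), ((((m + 1 : ℕ) : ℂ) + 1) * μ + r - 1 - (i : ℂ)))
          = (∏ i ∈ Finset.range m, (c - 1 - (i : ℂ))) * (c - 1 - (m : ℂ)) := by
        rw [← Finset.prod_range_succ (fun i => c - 1 - (i : ℂ)) m]
      have hC : (∏ i ∈ Finset.range m, (((m : ℂ) + 1) * μ + (r + μ) - 1 - (i : ℂ)))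
          = ∏ i ∈ Finset.range m, (c - 1 - (i : ℂ)) := by
        refine Finset.prod_congr rfl fun i _ => ?_
        rw [hc]; push_cast; ring
      rw [hA, hB, hC]
      set P : ℂ := ∏ i ∈ Finset.range m, (c - 1 - (i : ℂ)) with hP
      have hf : ((Nat.factorial (m + 1 + 1) : ℕ) : ℂ) =
          ((m : ℂ) + 2) * ((Nat.factorial (m + 1) : ℕ) : ℂ) := by
        rw [Nat.factorial_succ (m + 1)]; push_cast; ring
      have hf1 : ((Nat.factorial (m + 1) : ℕ) : ℂ) ≠ 0 :=
        Nat.cast_ne_zero.mpr (Nat.factorial_ne_zero _)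
      have hm2 : ((m : ℂ) + 2) ≠ 0 := by
        have : ((m : ℂ) + 2) = ((m + 2 : ℕ) : ℂ) := by push_cast; ring
        rw [this]
        exact Nat.cast_ne_zero.mpr (by omega)
      rw [hf, hc]
      field_simp
      push_cast
      ring

noncomputable def fcPoly (μ : ℂ) (t : ℕ) : Polynomial ℂ :=
  if t = 0 then 1
  else C ((Nat.factorial t : ℂ))⁻¹ * X *
    ∏ j ∈ Finset.Icc 1 (t - 1), (X + C ((t : ℂ) * μ - (j : ℂ)))

lemma fcPoly_eval (μ x : ℂ) (t : ℕ) : (fcPoly μ t).eval x = fussCatalan μ x t := by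
  unfold fcPoly fussCatalan
  split
  · simp
  · simp only [eval_mul, eval_C, eval_X, eval_prod, eval_add, div_eq_mul_inv]
    have hprod : (∏ j ∈ Finset.Icc 1 (t - 1), (x + ((t : ℂ) * μ - (j : ℂ))))
        = ∏ j ∈ Finset.Icc 1 (t - 1), ((t : ℂ) * μ + x - (j : ℂ)) :=
      Finset.prod_congr rfl fun j _ => by ring
    rw [hprod]
    ring

lemma poly_const_of_periodic (p : Polynomial ℂ) (h : ∀ x : ℂ, p.eval (x + 1) = p.eval x) :
    ∀ x : ℂ, p.eval x = p.eval 0 := by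
  have hn : ∀ n : ℕ, p.eval (n : ℂ) = p.eval 0 := by
    intro n
    induction n with
    | zero => simp
    | succ k ih => push_cast; rw [h]; exact ih
  have hq : p - C (p.eval 0) = 0 := by
    apply Polynomial.eq_zero_of_infinite_isRoot
    refine Set.Infinite.mono ?_ (Set.infinite_range_of_injective
      (Nat.cast_injective : Function.Injective (Nat.cast : ℕ → ℂ)))
    rintro x ⟨n, rfl⟩
    simp [Polynomial.IsRoot, hn n]
  intro x
  have := congrArg (Polynomial.eval x) hq
  simpa [sub_eq_zero] using this

lemma fussCatalan_zero_left (μ : ℂ) (u : ℕ) : fussCatalan μ 0 (u + 1) = 0 := by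
  simp [fussCatalan]

lemma fussCatalan_conv_aux (μ s : ℂ) : ∀ t : ℕ, ∀ r : ℂ,
    fussCatalan μ (r + s) t =
      ∑ u ∈ Finset.range (t + 1), fussCatalan μ s (t - u) * fussCatalan μ r u := by
  intro t
  induction t with
  | zero => intro r; simp [fussCatalan]
  | succ t ih =>
    intro r
    set p : Polynomial ℂ := (fcPoly μ (t + 1)).comp (X + C s)
        - ∑ u ∈ Finset.range (t + 2), C (fussCatalan μ s (t + 1 - u)) * fcPoly μ u with hp
    have hpe : ∀ x : ℂ, p.eval x = fussCatalan μ (x + s) (t + 1)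
        - ∑ u ∈ Finset.range (t + 2), fussCatalan μ s (t + 1 - u) * fussCatalan μ x u := by
      intro x
      simp [hp, eval_finset_sum, fcPoly_eval, eval_comp]
    have hper : ∀ x : ℂ, p.eval (x + 1) = p.eval x := by
      intro x
      rw [hpe, hpe]
      have h1 : fussCatalan μ (x + 1 + s) (t + 1)
          = fussCatalan μ (x + s) (t + 1) + fussCatalan μ (x + s + μ) t := by
        have h := fussCatalan_pascal μ (x + s) t
        rw [show x + 1 + s = x + s + 1 by ring]
        exact h
      have h2 : ∑ u ∈ Finset.range (t + 2), fussCatalan μ s (t + 1 - u) * fussCatalan μ (x + 1) u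
          = ∑ u ∈ Finset.range (t + 2), fussCatalan μ s (t + 1 - u) * fussCatalan μ x u
            + ∑ u ∈ Finset.range (t + 1), fussCatalan μ s (t - u) * fussCatalan μ (x + μ) u := by
        rw [Finset.sum_range_succ'
            (fun u => fussCatalan μ s (t + 1 - u) * fussCatalan μ (x + 1) u) (t + 1),
          Finset.sum_range_succ'
            (fun u => fussCatalan μ s (t + 1 - u) * fussCatalan μ x u) (t + 1)]
        have hterm : ∀ u ∈ Finset.range (t + 1),
            fussCatalan μ s (t + 1 - (u + 1)) * fussCatalan μ (x + 1) (u + 1)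
            = fussCatalan μ s (t + 1 - (u + 1)) * fussCatalan μ x (u + 1)
              + fussCatalan μ s (t - u) * fussCatalan μ (x + μ) u := by
          intro u _
          rw [fussCatalan_pascal, Nat.succ_sub_succ]
          ring
        rw [Finset.sum_congr rfl hterm, Finset.sum_add_distrib]
        have h00 : ∀ y : ℂ, fussCatalan μ y 0 = 1 := fun y => by simp [fussCatalan]
        simp only [h00]
        ring
      rw [h1, h2]
      have h3 := ih (x + μ)
      rw [show x + s + μ = x + μ + s by ring, h3]
      ring
    have h0 : p.eval 0 = 0 := by
      rw [hpe]
      rw [Finset.sum_range_succ'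
          (fun u => fussCatalan μ s (t + 1 - u) * fussCatalan μ (0 : ℂ) u) (t + 1)]
      have hz : ∀ u ∈ Finset.range (t + 1),
          fussCatalan μ s (t + 1 - (u + 1)) * fussCatalan μ (0 : ℂ) (u + 1) = 0 := by
        intro u _
        rw [fussCatalan_zero_left, mul_zero]
      rw [Finset.sum_eq_zero hz]
      simp [fussCatalan]
    have hr : p.eval r = 0 := by rw [poly_const_of_periodic p hper r, h0]
    rw [hpe] at hr
    exact sub_eq_zero.mp hr

/-- Convolution identity: `A_t(μ, r+s) = ∑_{u=0}^{t} A_u(μ, r) · A_{t-u}(μ, s)`. -/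
theorem fussCatalan_convolution (μ r s : ℂ) (t : ℕ) :
    fussCatalan μ (r + s) t =
      ∑ u ∈ Finset.range (t + 1), fussCatalan μ r u * fussCatalan μ s (t - u) := by
  rw [fussCatalan_conv_aux μ s t r]
  exact Finset.sum_congr rfl fun u _ => mul_comm _ _
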